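/- Let D ⊆ ℂ be open, Φ : D → ℂ⁴ and f : D → ℂ holomorphic, and a : D → ℂ⁴ holomorphic with Φ = f·a, a·a = 0, a·a′ = 0 and a ≠ 0 on D. For a vector w ∈ ℂ⁴ at a point t ∈ D, let w⊥ denote its component Hermitian-orthogonal to the span of {a(t), ā(t)}, i.e., w⊥ = w − ((w·ā)/‖a‖²)·a − ((w·a)/‖a‖²)·ā. Then at every point of D: (Φ′)⊥ = f·(a′)⊥ and (Φ′)⊥·(Φ′)⊥ = f²·(a′·a′). -/

import Mathlib

open Complex Finset

/-- Bilinear (complex) dot product on `ℂ⁴`. -/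
noncomputable def cdot (a b : Fin 4 → ℂ) : ℂ := ∑ j, a j * b j

/-- Hermitian norm squared on `ℂ⁴`. -/
noncomputable def hnormSq (a : Fin 4 → ℂ) : ℝ := ∑ j, ‖a j‖ ^ 2

/-- Component of `w` Hermitian-orthogonal to the span of `{a, ā}`:
`w⊥ = w - ((w·ā)/‖a‖²)·a - ((w·a)/‖a‖²)·ā`. -/
noncomputable def perp (a w : Fin 4 → ℂ) : Fin 4 → ℂ :=
  w - ((cdot w (fun j => starRingEnd ℂ (a j))) / (hnormSq a : ℂ)) • a
    - ((cdot w a) / (hnormSq a : ℂ)) • (fun j => starRingEnd ℂ (a j))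

/-- STATEMENT 12: if `Φ = f·a` with `Φ, f, a` holomorphic on the open set `D ⊆ ℂ`,
`a·a = 0`, `a·a′ = 0` and `a ≠ 0` on `D`, then at every point of `D`:
`(Φ′)⊥ = f·(a′)⊥` and `(Φ′)⊥·(Φ′)⊥ = f²·(a′·a′)`. -/
lemma cdot_comm' (x y : Fin 4 → ℂ) : cdot x y = cdot y x := by
  simp [cdot, mul_comm]

lemma cdot_add_left (x y z : Fin 4 → ℂ) : cdot (x + y) z = cdot x z + cdot y z := by
  simp [cdot, add_mul, Finset.sum_add_distrib]

lemma cdot_sub_left (x y z : Fin 4 → ℂ) : cdot (x - y) z = cdot x z - cdot y z := by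
  simp [cdot, sub_mul, Finset.sum_sub_distrib]

lemma cdot_smul_left (r : ℂ) (x y : Fin 4 → ℂ) : cdot (r • x) y = r * cdot x y := by
  simp [cdot, Finset.mul_sum, mul_assoc]

lemma cdot_sub_right (x y z : Fin 4 → ℂ) : cdot x (y - z) = cdot x y - cdot x z := by
  rw [cdot_comm', cdot_sub_left, cdot_comm' y x, cdot_comm' z x]

lemma cdot_smul_right (r : ℂ) (x y : Fin 4 → ℂ) : cdot x (r • y) = r * cdot x y := by
  rw [cdot_comm', cdot_smul_left, cdot_comm']

lemma cdot_add_right (x y z : Fin 4 → ℂ) : cdot x (y + z) = cdot x y + cdot x z := by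
  rw [cdot_comm', cdot_add_left, cdot_comm' y x, cdot_comm' z x]

theorem stmt12 (D : Set ℂ) (hD : IsOpen D)
    (Φ a : ℂ → (Fin 4 → ℂ)) (f : ℂ → ℂ)
    (hΦ : DifferentiableOn ℂ Φ D) (hf : DifferentiableOn ℂ f D)
    (ha : DifferentiableOn ℂ a D)
    (hfa : ∀ t ∈ D, Φ t = fun j => f t * a t j)
    (Φ' a' : ℂ → (Fin 4 → ℂ))
    (hΦ' : ∀ t j, Φ' t j = deriv (fun z => Φ z j) t)
    (ha' : ∀ t j, a' t j = deriv (fun z => a z j) t)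
    (haa : ∀ t ∈ D, cdot (a t) (a t) = 0)
    (haa' : ∀ t ∈ D, cdot (a t) (a' t) = 0)
    (hane : ∀ t ∈ D, a t ≠ 0) :
    ∀ t ∈ D,
      perp (a t) (Φ' t) = (fun j => f t * perp (a t) (a' t) j) ∧
      cdot (perp (a t) (Φ' t)) (perp (a t) (Φ' t)) =
        (f t) ^ 2 * cdot (a' t) (a' t) := by
  intro t ht
  have hmem := hD.mem_nhds ht
  have hfd : DifferentiableAt ℂ f t := (hf.differentiableAt hmem)
  have had : ∀ j, DifferentiableAt ℂ (fun z => a z j) t := fun j =>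
    differentiableAt_pi.mp (ha.differentiableAt hmem) j
  have hΦ'eq : Φ' t = deriv f t • a t + f t • a' t := by
    funext j
    rw [hΦ' t j]
    have hev : (fun z => Φ z j) =ᶠ[nhds t] fun z => f z * a z j :=
      Filter.eventuallyEq_of_mem hmem fun z hz => by rw [hfa z hz]
    rw [hev.deriv_eq, deriv_fun_mul hfd (had j)]
    simp [ha' t j]
  have hApos : 0 < hnormSq (a t) := by
    obtain ⟨j, hj⟩ := Function.ne_iff.mp (hane t ht)
    refine Finset.sum_pos' (fun i _ => by positivity) ⟨j, Finset.mem_univ j, ?_⟩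
    have := norm_pos_iff.mpr hj
    positivity
  have hN : (hnormSq (a t) : ℂ) ≠ 0 := by exact_mod_cast hApos.ne'
  have hNA : cdot (a t) (fun j => starRingEnd ℂ (a t j)) = (hnormSq (a t) : ℂ) := by
    simp only [cdot, hnormSq]
    push_cast
    exact Finset.sum_congr rfl fun j _ => by exact_mod_cast Complex.mul_conj' (a t j)
  have haaT := haa t ht
  have haa'T := haa' t ht
  have hsymm : cdot (a' t) (a t) = 0 := by rw [cdot_comm']; exact haa'T
  set c := cdot (a' t) (fun j => starRingEnd ℂ (a t j)) with hc
  set N := (hnormSq (a t) : ℂ) with hNdef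
  -- scalar products of Φ'
  have h1 : cdot (Φ' t) (fun j => starRingEnd ℂ (a t j)) = deriv f t * N + f t * c := by
    rw [hΦ'eq, cdot_add_left, cdot_smul_left, cdot_smul_left, hNA, ← hc]
  have h2 : cdot (Φ' t) (a t) = 0 := by
    rw [hΦ'eq, cdot_add_left, cdot_smul_left, cdot_smul_left, haaT, hsymm]
    ring
  have main : perp (a t) (Φ' t) = (fun j => f t * perp (a t) (a' t) j) := by
    rw [hΦ'eq] at h1 h2
    funext j
    rw [hΦ'eq]
    simp only [perp, h1, h2, hsymm, zero_div, zero_smul, sub_zero, Pi.sub_apply,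
      Pi.smul_apply, smul_eq_mul, hΦ'eq, Pi.add_apply]
    simp only [Pi.zero_apply, mul_zero, sub_zero, ← hNdef, ← hc]
    field_simp
    ring
  refine ⟨main, ?_⟩
  rw [main]
  have hfp : (fun j => f t * perp (a t) (a' t) j) = f t • perp (a t) (a' t) := rfl
  rw [hfp, cdot_smul_left, cdot_smul_right]
  have key : cdot (perp (a t) (a' t)) (perp (a t) (a' t)) = cdot (a' t) (a' t) := by
    simp only [perp, hsymm, zero_div, zero_smul, sub_zero]
    rw [cdot_sub_left, cdot_sub_right, cdot_sub_right, cdot_smul_left, cdot_smul_right,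
      cdot_smul_left, cdot_smul_right, haaT, haa'T, hsymm, ← hc]
    field_simp
    simp
  rw [key]
  ring
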